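/- Let A ⊆ ℝ² be compact with 0 ∈ int(A), and suppose κ₁, κ₂ ∈ L^p([0,L];ℝ) satisfy the constraint max_{(ζ₁,ζ₂)∈A} (ζ₁ κ₂(s) − ζ₂ κ₁(s)) ≤ 1 for a.e. s. If δ > 0 is such that the closed square of side 6δ centered at some (ζ̄₁,ζ̄₂) is contained in int(A), then 1 + ζ₂ κ₁(s) − ζ₁ κ₂(s) ≥ 2δ(|κ₁(s)| + |κ₂(s)|) for a.e. s and all (ζ₁,ζ₂) with |ζ₁−ζ̄₁| < δ, |ζ₂−ζ̄₂| < δ. -/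

import Mathlib

open MeasureTheory Filter Set
open scoped RealInnerProductSpace ENNReal NNReal Topology

noncomputable section

/-- if the local non-interpenetration constraint
`max_{(ζ₁,ζ₂)∈A} (ζ₁κ₂(s) − ζ₂κ₁(s)) ≤ 1` holds a.e. and the closed square of
side `6δ` centered at `(ζ̄₁,ζ̄₂)` is contained in `int(A)`, then
`1 + ζ₂κ₁(s) − ζ₁κ₂(s) ≥ 2δ(|κ₁(s)| + |κ₂(s)|)` for a.e. `s` and all `(ζ₁,ζ₂)`
with `|ζ₁−ζ̄₁| < δ`, `|ζ₂−ζ̄₂| < δ`. -/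
theorem stmt7 (L p : ℝ) (hL : 0 < L) (hp : 1 < p)
    (A : Set (ℝ × ℝ)) (hAc : IsCompact A) (hA0 : (0, 0) ∈ interior A)
    (κ₁ κ₂ : ℝ → ℝ)
    (hκ₁ : MemLp κ₁ (ENNReal.ofReal p) (volume.restrict (Set.Icc 0 L)))
    (hκ₂ : MemLp κ₂ (ENNReal.ofReal p) (volume.restrict (Set.Icc 0 L)))
    (hni : ∀ᵐ s ∂(volume.restrict (Set.Icc 0 L)),
      ∀ ζ ∈ A, ζ.1 * κ₂ s - ζ.2 * κ₁ s ≤ 1)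
    (δ zb₁ zb₂ : ℝ) (hδ : 0 < δ)
    (hsq : Set.Icc (zb₁ - 3 * δ) (zb₁ + 3 * δ) ×ˢ Set.Icc (zb₂ - 3 * δ) (zb₂ + 3 * δ)
      ⊆ interior A) :
    ∀ᵐ s ∂(volume.restrict (Set.Icc 0 L)), ∀ ζ₁ ζ₂ : ℝ,
      |ζ₁ - zb₁| < δ → |ζ₂ - zb₂| < δ →
      2 * δ * (|κ₁ s| + |κ₂ s|) ≤ 1 + ζ₂ * κ₁ s - ζ₁ * κ₂ s := by
  filter_upwards [hni] with s hs ζ₁ ζ₂ h1 h2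
  set σ₁ : ℝ := if 0 ≤ κ₁ s then 1 else -1 with hσ₁
  set σ₂ : ℝ := if 0 ≤ κ₂ s then 1 else -1 with hσ₂
  have hs₁ : σ₁ * κ₁ s = |κ₁ s| := by
    rcases le_or_gt 0 (κ₁ s) with h | h
    · simp [hσ₁, h, abs_of_nonneg h]
    · simp [hσ₁, not_le.2 h, abs_of_neg h]
  have hs₂ : σ₂ * κ₂ s = |κ₂ s| := by
    rcases le_or_gt 0 (κ₂ s) with h | h
    · simp [hσ₂, h, abs_of_nonneg h]
    · simp [hσ₂, not_le.2 h, abs_of_neg h]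
  have habs₁ : |σ₁| = 1 := by rcases le_or_gt 0 (κ₁ s) with h | h <;> simp [hσ₁, h, not_le.2, le_of_lt]
  have habs₂ : |σ₂| = 1 := by rcases le_or_gt 0 (κ₂ s) with h | h <;> simp [hσ₂, h, not_le.2, le_of_lt]
  have hmem : (ζ₁ + 2 * δ * σ₂, ζ₂ - 2 * δ * σ₁) ∈ A := by
    apply interior_subset
    apply hsq
    constructor
    · have : |ζ₁ + 2 * δ * σ₂ - zb₁| ≤ 3 * δ := by
        calc |ζ₁ + 2 * δ * σ₂ - zb₁| = |(ζ₁ - zb₁) + 2 * δ * σ₂| := by ring_nf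
          _ ≤ |ζ₁ - zb₁| + |2 * δ * σ₂| := abs_add_le _ _
          _ ≤ δ + 2 * δ := by
              have : |2 * δ * σ₂| = 2 * δ := by
                rw [abs_mul, habs₂, mul_one, abs_of_pos (by linarith)]
              linarith [h1.le]
          _ = 3 * δ := by ring
      rw [abs_le] at this
      constructor <;> simp <;> linarith [this.1, this.2]
    · have : |ζ₂ - 2 * δ * σ₁ - zb₂| ≤ 3 * δ := by
        calc |ζ₂ - 2 * δ * σ₁ - zb₂| = |(ζ₂ - zb₂) + (-(2 * δ * σ₁))| := by ring_nf
          _ ≤ |ζ₂ - zb₂| + |(-(2 * δ * σ₁))| := abs_add_le _ _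
          _ ≤ δ + 2 * δ := by
              have : |(-(2 * δ * σ₁))| = 2 * δ := by
                rw [abs_neg, abs_mul, habs₁, mul_one, abs_of_pos (by linarith)]
              linarith [h2.le]
          _ = 3 * δ := by ring
      rw [abs_le] at this
      constructor <;> simp <;> linarith [this.1, this.2]
  have := hs _ hmem
  simp only at this
  nlinarith [hs₁, hs₂]
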